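/- Fix points x_1,…,x_M ∈ ℝ^d and y_1,…,y_N ∈ ℝ^d, weights μ ∈ ℝ^M with positive entries and Σ_i μ_i = 1, and ν ∈ ℝ^M with nonnegative entries and Σ_j ν_j = 1. Let c : ℝ^d × ℝ^d → ℝ be convex in its second argument. Then for every feasible pair (π^x, π^y) of the relaxed problem with respect to Y = {y_1,…,y_N}, the Jensen inequality Σ_{i=1}^M μ_i·c(x_i, (1/μ_i)·Σ_{j=1}^M π^x_{ij}·x_j) ≤ Σ_{i=1}^M Σ_{k=1}^N π^y_{ik}·c(x_i, y_k) holds. In particular, V(μ, ν) is less than or equal to the optimal value of the relaxed problem. -/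

import Mathlib

/-- The set of couplings of `μ` and `ν`. -/
def PiSet {M : ℕ} (μ ν : Fin M → ℝ) : Set (Fin M → Fin M → ℝ) :=
  {π | (∀ i j, 0 ≤ π i j) ∧ (∀ i, ∑ j, π i j = μ i) ∧ (∀ j, ∑ i, π i j = ν j)}

/-- The Jensen relaxation inequality for barycentric weak OT: for every
feasible pair `(πˣ, πʸ)` of the relaxed problem,
`∑ᵢ μᵢ c(xᵢ, (1/μᵢ)∑ⱼ πˣᵢⱼ xⱼ) ≤ ∑ᵢₖ πʸᵢₖ c(xᵢ, yₖ)`; in particular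
`V(μ, ν)` is bounded by the relaxed value. -/
theorem stmt15 {d M N : ℕ}
    (x : Fin M → EuclideanSpace ℝ (Fin d))
    (y : Fin N → EuclideanSpace ℝ (Fin d))
    (μ ν : Fin M → ℝ) (hμ : ∀ i, 0 < μ i) (hμs : ∑ i, μ i = 1)
    (hν : ∀ j, 0 ≤ ν j) (hνs : ∑ j, ν j = 1)
    (c : EuclideanSpace ℝ (Fin d) → EuclideanSpace ℝ (Fin d) → ℝ)
    (hc : ∀ a, ConvexOn ℝ Set.univ (c a))
    (V : ℝ)
    (hV : V = sInf ((fun π : Fin M → Fin M → ℝ =>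
      ∑ i, μ i * c (x i) ((μ i)⁻¹ • ∑ j, π i j • x j)) '' PiSet μ ν)) :
    ∀ (πx : Fin M → Fin M → ℝ) (πy : Fin M → Fin N → ℝ),
      πx ∈ PiSet μ ν → (∀ i k, 0 ≤ πy i k) → (∀ i, ∑ k, πy i k = μ i) →
      (∀ i, ∑ j, πx i j • x j = ∑ k, πy i k • y k) →
      (∑ i, μ i * c (x i) ((μ i)⁻¹ • ∑ j, πx i j • x j) ≤
        ∑ i, ∑ k, πy i k * c (x i) (y k)) ∧
      V ≤ ∑ i, ∑ k, πy i k * c (x i) (y k) := by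
  intro πx πy hπx hπy0 hπys hbary
  have jensen : ∀ i, μ i * c (x i) ((μ i)⁻¹ • ∑ j, πx i j • x j) ≤
      ∑ k, πy i k * c (x i) (y k) := by
    intro i
    rw [hbary i]
    have h1 : (μ i)⁻¹ • ∑ k, πy i k • y k = ∑ k, ((μ i)⁻¹ * πy i k) • y k := by
      rw [Finset.smul_sum]; simp [smul_smul]
    rw [h1]
    have hJ := (hc (x i)).map_sum_le (t := Finset.univ)
      (w := fun k => (μ i)⁻¹ * πy i k) (p := y)
      (fun k _ => mul_nonneg (inv_nonneg.2 (hμ i).le) (hπy0 i k))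
      (by rw [← Finset.mul_sum, hπys i, inv_mul_cancel₀ (hμ i).ne'])
      (fun k _ => trivial)
    calc μ i * c (x i) (∑ k, ((μ i)⁻¹ * πy i k) • y k)
        ≤ μ i * ∑ k, ((μ i)⁻¹ * πy i k) • c (x i) (y k) :=
          mul_le_mul_of_nonneg_left hJ (hμ i).le
      _ = ∑ k, πy i k * c (x i) (y k) := by
          rw [Finset.mul_sum]
          refine Finset.sum_congr rfl fun k _ => ?_
          have hne : μ i ≠ 0 := (hμ i).ne'
          simp [smul_eq_mul]
          field_simp
  have hsum : ∑ i, μ i * c (x i) ((μ i)⁻¹ • ∑ j, πx i j • x j) ≤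
      ∑ i, ∑ k, πy i k * c (x i) (y k) :=
    Finset.sum_le_sum fun i _ => jensen i
  refine ⟨hsum, ?_⟩
  -- lower bound for the objective over PiSet
  have hK : IsCompact (convexHull ℝ (Set.range x)) :=
    (Set.finite_range x).isCompact_convexHull (𝕜 := ℝ)
  have hmin : ∀ i : Fin M, ∃ m : ℝ, ∀ z ∈ convexHull ℝ (Set.range x), m ≤ c (x i) z := by
    intro i
    obtain ⟨z0, hz0, hz0min⟩ := hK.exists_isMinOn
      ⟨x i, subset_convexHull ℝ _ ⟨i, rfl⟩⟩
      (((hc (x i)).continuousOn isOpen_univ).mono (Set.subset_univ _))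
    exact ⟨c (x i) z0, fun z hz => hz0min hz⟩
  choose m hm using hmin
  have hbdd : BddBelow ((fun π : Fin M → Fin M → ℝ =>
      ∑ i, μ i * c (x i) ((μ i)⁻¹ • ∑ j, π i j • x j)) '' PiSet μ ν) := by
    refine ⟨∑ i, μ i * m i, ?_⟩
    rintro v ⟨π, hπ, rfl⟩
    refine Finset.sum_le_sum fun i _ => ?_
    refine mul_le_mul_of_nonneg_left ?_ (hμ i).le
    refine hm i _ ?_
    have hcm : (μ i)⁻¹ • ∑ j, π i j • x j = Finset.univ.centerMass (π i) x := by
      simp [Finset.centerMass, hπ.2.1 i]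
    rw [hcm]
    exact Finset.centerMass_mem_convexHull _ (fun j _ => hπ.1 i j)
      (by rw [hπ.2.1 i]; exact hμ i) (fun j _ => ⟨j, rfl⟩)
  rw [hV]
  exact le_trans (csInf_le hbdd ⟨πx, hπx, rfl⟩) hsum
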